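/- If a strongly connected synchronizing n-state automaton A satisfies the (k-1)n-Balanced property (every proper subset S of Q admits words v₁,…,v_m with |vᵢ| < (k-1)n and ∑[S·vᵢ⁻¹] = m(|S|/n)[Q]), then every proper subset of Q is kn-Extendable. -/

import Mathlib

/-- Action of a word on a state of a DFA. -/
def act {Q A : Type*} (δ : Q → A → Q) (q : Q) (w : List A) : Q := w.foldl δ q

/-- Preimage `S·w⁻¹ = {q : q·w ∈ S}` of a subset under a word. -/
def preim {Q A : Type*} [Fintype Q] [DecidableEq Q] (δ : Q → A → Q)
    (S : Finset Q) (w : List A) : Finset Q :=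
  Finset.univ.filter fun q => act δ q w ∈ S

section Aux

variable {Q A : Type*} [Fintype Q] [DecidableEq Q] (δ : Q → A → Q)

lemma act_append (q : Q) (u v : List A) :
    act δ q (u ++ v) = act δ (act δ q u) v := List.foldl_append ..

lemma mem_preim (S : Finset Q) (w : List A) (q : Q) :
    q ∈ preim δ S w ↔ act δ q w ∈ S := by
  simp [preim]

/-- `β_u(q') = #{q : q·u = q'}` as a real vector. -/
noncomputable def beta (u : List A) : Q → ℝ :=
  fun q' => ∑ q : Q, if act δ q u = q' then 1 else 0

/-- The linear "letter-preimage-count" operator. -/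
noncomputable def Lmap (a : A) : (Q → ℝ) →ₗ[ℝ] (Q → ℝ) where
  toFun g := fun q' => ∑ q : Q, if δ q a = q' then g q else 0
  map_add' g h := by
    funext q'
    show (∑ q : Q, if δ q a = q' then (g + h) q else 0)
      = (∑ q : Q, if δ q a = q' then g q else 0) + ∑ q : Q, if δ q a = q' then h q else 0
    rw [← Finset.sum_add_distrib]
    refine Finset.sum_congr rfl fun q _ => ?_
    by_cases hq : δ q a = q' <;> simp [hq]
  map_smul' c g := by
    funext q'
    show (∑ q : Q, if δ q a = q' then (c • g) q else 0)
      = c * ∑ q : Q, if δ q a = q' then g q else 0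
    rw [Finset.mul_sum]
    refine Finset.sum_congr rfl fun q _ => ?_
    by_cases hq : δ q a = q' <;> simp [hq]

lemma beta_append_singleton (u : List A) (a : A) :
    beta δ (u ++ [a]) = Lmap δ a (beta δ u) := by
  funext q'
  show (∑ q : Q, if act δ q (u ++ [a]) = q' then (1:ℝ) else 0)
      = ∑ q'' : Q, if δ q'' a = q' then beta δ u q'' else 0
  have h1 : ∀ q : Q, act δ q (u ++ [a]) = δ (act δ q u) a := by
    intro q; rw [act_append]; rfl
  have h2 : ∀ q'' : Q, (if δ q'' a = q' then beta δ u q'' else 0)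
      = ∑ q : Q, if act δ q u = q'' then (if δ q'' a = q' then (1:ℝ) else 0) else 0 := by
    intro q''
    by_cases hq : δ q'' a = q'
    · simp [hq, beta]
    · simp [hq]
  simp only [h2]
  rw [Finset.sum_comm]
  refine Finset.sum_congr rfl fun q _ => ?_
  rw [Finset.sum_ite_eq Finset.univ (act δ q u)
    (fun q'' => if δ q'' a = q' then (1:ℝ) else 0)]
  simp [h1 q]

/-- Span of the `β_u` for words of length at most `t`. -/
noncomputable def Wspan (t : ℕ) : Submodule ℝ (Q → ℝ) :=
  Submodule.span ℝ {g | ∃ u : List A, u.length ≤ t ∧ beta δ u = g}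

lemma beta_mem_Wspan {u : List A} {t : ℕ} (h : u.length ≤ t) :
    beta δ u ∈ Wspan δ t :=
  Submodule.subset_span ⟨u, h, rfl⟩

lemma Wspan_mono {t t' : ℕ} (h : t ≤ t') : Wspan (A := A) δ t ≤ Wspan δ t' :=
  Submodule.span_mono fun g ⟨u, hu, hg⟩ => ⟨u, hu.trans h, hg⟩

lemma Lmap_Wspan (a : A) (t : ℕ) :
    Submodule.map (Lmap δ a) (Wspan δ t) ≤ Wspan δ (t + 1) := by
  rw [Wspan, Submodule.map_span, Submodule.span_le]
  rintro g ⟨g', ⟨u, hu, rfl⟩, rfl⟩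
  exact Submodule.subset_span ⟨u ++ [a], by simpa using Nat.add_le_add_right hu 1,
    beta_append_singleton δ u a⟩

lemma Wspan_stab {t : ℕ} (H : Wspan (A := A) δ t = Wspan δ (t + 1)) :
    ∀ u : List A, beta δ u ∈ Wspan δ t := by
  intro u
  induction u using List.reverseRecOn with
  | nil => exact beta_mem_Wspan δ (Nat.zero_le _)
  | append_singleton u a ih =>
      rw [beta_append_singleton]
      have : Lmap δ a (beta δ u) ∈ Submodule.map (Lmap δ a) (Wspan δ t) :=
        Submodule.mem_map_of_mem ih
      exact H ▸ (Lmap_Wspan δ a t this)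

lemma exists_Wspan_stab :
    ∃ t : ℕ, t ≤ Fintype.card Q ∧ Wspan (A := A) δ t = Wspan δ (t + 1) := by
  by_contra hcon
  push_neg at hcon
  have hstrict : ∀ t : ℕ, t ≤ Fintype.card Q →
      Wspan (A := A) δ t < Wspan δ (t + 1) := fun t ht =>
    lt_of_le_of_ne (Wspan_mono δ (Nat.le_succ t)) (hcon t ht)
  have hrank : ∀ t : ℕ, t ≤ Fintype.card Q + 1 →
      t ≤ Module.finrank ℝ (Wspan (A := A) δ t) := by
    intro t
    induction t with
    | zero => intro _; exact Nat.zero_le _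
    | succ t ih =>
        intro ht
        have ht' : t ≤ Fintype.card Q := Nat.lt_succ_iff.mp ht
        have h1 := Submodule.finrank_lt_finrank_of_lt (hstrict t ht')
        have h2 := ih (ht'.trans (Nat.le_succ _))
        omega
  have h1 := hrank (Fintype.card Q + 1) le_rfl
  have h2 : Module.finrank ℝ (Wspan (A := A) δ (Fintype.card Q + 1))
      ≤ Module.finrank ℝ (Q → ℝ) := Submodule.finrank_le _
  rw [Module.finrank_fintype_fun_eq_card] at h2
  omega

lemma beta_mem_Wspan_card (u : List A) :
    beta δ u ∈ Wspan δ (Fintype.card Q) := by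
  obtain ⟨t, ht, hW⟩ := exists_Wspan_stab (A := A) δ
  exact Wspan_mono δ ht (Wspan_stab δ hW u)

lemma sum_beta_mul (u : List A) (c : Q → ℝ) :
    ∑ q' : Q, beta δ u q' * c q' = ∑ q : Q, c (act δ q u) := by
  simp only [beta, Finset.sum_mul]
  rw [Finset.sum_comm]
  refine Finset.sum_congr rfl fun q _ => ?_
  have : ∀ q' : Q, (if act δ q u = q' then (1:ℝ) else 0) * c q'
      = if act δ q u = q' then c q' else 0 := by
    intro q'; by_cases h : act δ q u = q' <;> simp [h]
  simp only [this]
  rw [Finset.sum_ite_eq Finset.univ (act δ q u) c]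
  simp

end Aux

theorem stmt14 {Q A : Type*} [Fintype Q] [DecidableEq Q] (δ : Q → A → Q)
    (n k : ℕ) (hn : Fintype.card Q = n)
    (hsync : ∃ (w : List A) (p : Q), ∀ q : Q, act δ q w = p)
    (hsc : ∀ p q : Q, ∃ u : List A, act δ p u = q)
    (hbal : ∀ S : Finset Q, S.Nonempty → S ≠ Finset.univ →
      ∃ (m : ℕ) (v : Fin m → List A), 0 < m ∧
        (∀ i, (v i).length < (k - 1) * n) ∧
        ∀ q : Q, (∑ i : Fin m, (if q ∈ preim δ S (v i) then (1 : ℝ) else 0)) =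
          (m : ℝ) * ((S.card : ℝ) / (n : ℝ)) *
            (if q ∈ (Finset.univ : Finset Q) then (1 : ℝ) else 0)) :
    ∀ S : Finset Q, S.Nonempty → S ≠ Finset.univ →
      ∃ v : List A, v.length ≤ k * n ∧ S.card < (preim δ S v).card := by
  intro S hS hSne
  by_contra hcon
  push_neg at hcon
  -- hcon : ∀ v, v.length ≤ k * n → (preim δ S v).card ≤ S.card
  obtain ⟨m, v, hm, hlen, hb⟩ := hbal S hS hSne
  obtain ⟨w, p, hw⟩ := hsync
  haveI : Nonempty Q := ⟨hS.choose⟩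
  have hn1 : 1 ≤ n := hn ▸ Fintype.card_pos
  have hk1 : 1 ≤ (k - 1) * n := by
    by_contra h
    have h0 : (k - 1) * n = 0 := by omega
    have := hlen ⟨0, hm⟩
    omega
  have hkk : (k - 1) * n + n = k * n := by
    rcases k with _ | k'
    · simp at hk1
    · simp [Nat.succ_sub_one, Nat.succ_mul]
  -- simplify hb
  have hb' : ∀ q : Q, (∑ i : Fin m, (if q ∈ preim δ S (v i) then (1 : ℝ) else 0)) =
      (m : ℝ) * ((S.card : ℝ) / (n : ℝ)) := by
    intro q; rw [hb q]; simp
  have hScard : (0:ℝ) < S.card := by exact_mod_cast hS.card_pos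
  have hnR : (0:ℝ) < (n:ℝ) := by exact_mod_cast hn1
  have hSlt : S.card < n := by
    have : S ⊂ Finset.univ := Finset.ssubset_univ_iff.mpr hSne
    have := Finset.card_lt_card this
    rwa [Finset.card_univ, hn] at this
  -- membership transfer
  have hmem : ∀ (u : List A) (i : Fin m) (q : Q),
      (act δ q u ∈ preim δ S (v i)) ↔ q ∈ preim δ S (u ++ v i) := by
    intro u i q
    rw [mem_preim, mem_preim, act_append]
  -- card of preimage as a sum
  have hcardsum : ∀ (T : Finset Q), ∑ q : Q, (if q ∈ T then (1:ℝ) else 0) = T.card := by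
    intro T
    rw [Finset.sum_ite_mem, Finset.univ_inter, Finset.sum_const]
    simp
  -- Step A : find u of length ≤ n and i with |S (u ++ v i)⁻¹| ≠ |S|
  have stepA : ∃ u : List A, u.length ≤ n ∧ ∃ i : Fin m,
      ((preim δ S (u ++ v i)).card : ℝ) ≠ S.card := by
    by_contra hall
    push_neg at hall
    -- find i₀ with p ∈ preim δ S (v i₀)
    have hpos : (0:ℝ) < (m : ℝ) * ((S.card : ℝ) / (n : ℝ)) := by
      apply mul_pos
      · exact_mod_cast hm
      · exact div_pos hScard hnR
    obtain ⟨i₀, hi₀⟩ : ∃ i₀ : Fin m, p ∈ preim δ S (v i₀) := by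
      by_contra hno
      push_neg at hno
      have := hb' p
      rw [Finset.sum_eq_zero (fun i _ => by simp [hno i])] at this
      rw [← this] at hpos
      exact lt_irrefl _ hpos
    -- the functional
    set c : Q → ℝ := fun q => (if q ∈ preim δ S (v i₀) then (1:ℝ) else 0) - (S.card : ℝ) / n
      with hc
    set φ : (Q → ℝ) →ₗ[ℝ] ℝ := ∑ q : Q, c q • LinearMap.proj q with hφ
    have hφ_apply' : ∀ g : Q → ℝ, φ g = ∑ q' : Q, g q' * c q' := by
      intro g
      rw [hφ]
      simp [LinearMap.sum_apply, mul_comm]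
    -- φ (beta u) = card (preim (u ++ v i₀)) - S.card
    have hφbeta : ∀ u : List A, φ (beta δ u)
        = ((preim δ S (u ++ v i₀)).card : ℝ) - S.card := by
      intro u
      rw [hφ_apply', sum_beta_mul]
      have : ∀ q : Q, c (act δ q u)
          = (if q ∈ preim δ S (u ++ v i₀) then (1:ℝ) else 0) - (S.card : ℝ) / n := by
        intro q
        simp only [hc, hmem u i₀ q]
      simp only [this]
      rw [Finset.sum_sub_distrib, hcardsum, Finset.sum_const, Finset.card_univ, hn]
      congr 1
      rw [nsmul_eq_mul]; field_simp
    -- φ vanishes on Wspan n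
    have hker : Wspan (A := A) δ (Fintype.card Q) ≤ LinearMap.ker φ := by
      rw [Wspan, Submodule.span_le]
      rintro g ⟨u, hu, rfl⟩
      have : φ (beta δ u) = 0 := by
        rw [hφbeta u, hall u (hn ▸ hu) i₀]; ring
      exact LinearMap.mem_ker.mpr this
    have hzero : φ (beta δ w) = 0 := hker (beta_mem_Wspan_card δ w)
    -- but φ (beta w) = n - S.card ≠ 0
    have hval : φ (beta δ w) = (n : ℝ) - S.card := by
      rw [hφ_apply', sum_beta_mul]
      have : ∀ q : Q, c (act δ q w) = 1 - (S.card : ℝ) / n := by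
        intro q; rw [hw q, hc]; simp [hi₀]
      simp only [this]
      rw [Finset.sum_const, Finset.card_univ, hn]
      rw [nsmul_eq_mul]; field_simp
    rw [hval] at hzero
    have : (S.card : ℝ) < n := by exact_mod_cast hSlt
    linarith
  obtain ⟨u, hu, i, hi⟩ := stepA
  -- Step B : the pointwise balance identity shifted by the prefix u
  have hlen' : ∀ j : Fin m, (u ++ v j).length ≤ k * n := by
    intro j
    rw [List.length_append, ← hkk]
    have := hlen j
    omega
  have hble : ∀ j : Fin m, ((preim δ S (u ++ v j)).card : ℝ) ≤ S.card := by
    intro j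
    exact_mod_cast hcon _ (hlen' j)
  have hsum : ∑ j : Fin m, ((preim δ S (u ++ v j)).card : ℝ) = m * S.card := by
    have hq : ∀ q : Q, (∑ j : Fin m, (if q ∈ preim δ S (u ++ v j) then (1:ℝ) else 0))
        = (m : ℝ) * ((S.card : ℝ) / (n : ℝ)) := by
      intro q
      rw [← hb' (act δ q u)]
      refine Finset.sum_congr rfl fun j _ => ?_
      simp only [hmem u j q]
    calc ∑ j : Fin m, ((preim δ S (u ++ v j)).card : ℝ)
        = ∑ j : Fin m, ∑ q : Q, (if q ∈ preim δ S (u ++ v j) then (1:ℝ) else 0) := by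
          refine Finset.sum_congr rfl fun j _ => (hcardsum _).symm
      _ = ∑ q : Q, ∑ j : Fin m, (if q ∈ preim δ S (u ++ v j) then (1:ℝ) else 0) :=
          Finset.sum_comm
      _ = ∑ q : Q, (m : ℝ) * ((S.card : ℝ) / (n : ℝ)) :=
          Finset.sum_congr rfl fun q _ => hq q
      _ = (n : ℝ) * ((m : ℝ) * ((S.card : ℝ) / (n : ℝ))) := by
          rw [Finset.sum_const, Finset.card_univ, hn]; simp [nsmul_eq_mul]
      _ = m * S.card := by field_simp
  have hstrict : ∑ j : Fin m, ((preim δ S (u ++ v j)).card : ℝ)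
      < ∑ j : Fin m, (S.card : ℝ) := by
    refine Finset.sum_lt_sum (fun j _ => hble j) ⟨i, Finset.mem_univ i, ?_⟩
    exact lt_of_le_of_ne (hble i) hi
  rw [hsum, Finset.sum_const, Finset.card_univ, Fintype.card_fin, nsmul_eq_mul] at hstrict
  exact lt_irrefl _ hstrict
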